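/- Let k : [0, r₀] → ℝ be C¹, nonnegative, and satisfy k'(r) ≤ (k(r)² + 1)(M + 1) where M ≥ 0 is a constant bounding the relevant curvature. Then for r, ε with (1+ε)r ≤ r₀, (k(r(1+ε)) − k(r(1−ε)))/(1 + k(r(1+ε))·k(r(1−ε))) ≤ tan(2εr(M+1)), provided 2εr(M+1) < π/2. -/

import Mathlib

/-- Radial Harnack estimate for the second fundamental form:
`k' ≤ (k²+1)(M+1)` implies the arctan-difference bound
`(k(r(1+ε)) − k(r(1−ε)))/(1 + k(r(1+ε))k(r(1−ε))) ≤ tan(2εr(M+1))`. -/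
theorem stmt2 (r₀ M : ℝ) (hr₀ : 0 < r₀) (hM : 0 ≤ M) (k : ℝ → ℝ)
    (hk : ContDiffOn ℝ 1 k (Set.Icc 0 r₀))
    (hknn : ∀ x ∈ Set.Icc 0 r₀, 0 ≤ k x)
    (hk' : ∀ x ∈ Set.Icc 0 r₀, deriv k x ≤ ((k x)^2 + 1) * (M + 1)) :
    ∀ r ε : ℝ, 0 < r → 0 < ε → ε < 1 → r*(1+ε) ≤ r₀ →
      2*ε*r*(M+1) < Real.pi/2 →
      (k (r*(1+ε)) - k (r*(1-ε))) / (1 + k (r*(1+ε)) * k (r*(1-ε)))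
        ≤ Real.tan (2*ε*r*(M+1)) := by
  intro r ε hr hε hε1 hbr₀ hT
  set a := r*(1-ε) with ha_def
  set b := r*(1+ε) with hb_def
  have ha0 : 0 < a := by rw [ha_def]; nlinarith
  have hab : a < b := by
    rw [ha_def, hb_def]; nlinarith
  have hsub : Set.Icc a b ⊆ Set.Icc 0 r₀ := by
    intro x hx
    exact ⟨le_trans ha0.le hx.1, le_trans hx.2 hbr₀⟩
  have hamem : a ∈ Set.Icc 0 r₀ := hsub ⟨le_rfl, hab.le⟩
  have hbmem : b ∈ Set.Icc 0 r₀ := hsub ⟨hab.le, le_rfl⟩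
  -- the auxiliary function
  set g : ℝ → ℝ := fun x => (M+1)*x - Real.arctan (k x) with hg_def
  have hkcont : ContinuousOn k (Set.Icc 0 r₀) := hk.continuousOn
  have hgc : ContinuousOn g (Set.Icc a b) := by
    apply ContinuousOn.sub (by fun_prop)
    exact (Real.continuous_arctan.comp_continuousOn (hkcont.mono hsub))
  have hderiv : ∀ t ∈ Set.Ioo a b,
      HasDerivAt g ((M+1) - (1/(1 + (k t)^2)) * deriv k t) t := by
    intro t ht
    have htmem : t ∈ Set.Ioo 0 r₀ :=
      ⟨lt_trans ha0 ht.1, lt_of_lt_of_le ht.2 hbr₀⟩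
    have hnhds : Set.Icc 0 r₀ ∈ nhds t := Icc_mem_nhds htmem.1 htmem.2
    have hkd : DifferentiableAt ℝ k t :=
      ((hk.contDiffAt hnhds).differentiableAt one_ne_zero)
    have h1 : HasDerivAt (fun x => Real.arctan (k x))
        ((1/(1 + (k t)^2)) * deriv k t) t := by
      have := (Real.hasDerivAt_arctan (k t)).comp t hkd.hasDerivAt
      simpa [mul_comm, Function.comp_def] using this
    have h2 : HasDerivAt (fun x => (M+1)*x) (M+1) t := by
      simpa using (hasDerivAt_id t).const_mul (M+1)
    exact h2.sub h1
  have hgm : MonotoneOn g (Set.Icc a b) := by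
    apply monotoneOn_of_deriv_nonneg (convex_Icc a b) hgc
    · intro t ht
      rw [interior_Icc] at ht
      exact ((hderiv t ht).differentiableAt).differentiableWithinAt
    · intro t ht
      rw [interior_Icc] at ht
      rw [(hderiv t ht).deriv]
      have htmem : t ∈ Set.Icc 0 r₀ := hsub ⟨ht.1.le, ht.2.le⟩
      have hb1 : deriv k t ≤ ((k t)^2 + 1) * (M + 1) := hk' t htmem
      have hpos : (0:ℝ) < 1 + (k t)^2 := by positivity
      rw [sub_nonneg, one_div, ← div_eq_inv_mul, div_le_iff₀ hpos]
      nlinarith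
  have hgab : g a ≤ g b := hgm ⟨le_rfl, hab.le⟩ ⟨hab.le, le_rfl⟩ hab.le
  have key : Real.arctan (k b) - Real.arctan (k a) ≤ 2*ε*r*(M+1) := by
    have : (M+1)*a - Real.arctan (k a) ≤ (M+1)*b - Real.arctan (k b) := hgab
    have hba : b - a = 2*ε*r := by rw [ha_def, hb_def]; ring
    nlinarith
  have hka : 0 ≤ k a := hknn a hamem
  have hkb : 0 ≤ k b := hknn b hbmem
  -- rewrite the LHS as tan of a difference of arctans
  have hprod : k b * (-(k a)) < 1 := by nlinarith
  have hid : Real.arctan (k b) - Real.arctan (k a)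
      = Real.arctan ((k b - k a) / (1 + k b * k a)) := by
    have := Real.arctan_add hprod
    rw [Real.arctan_neg] at this
    have h1 : k b + -k a = k b - k a := by ring
    have h2 : 1 - k b * -k a = 1 + k b * k a := by ring
    rw [h1, h2] at this
    linarith
  have hLHS : (k b - k a) / (1 + k b * k a)
      = Real.tan (Real.arctan (k b) - Real.arctan (k a)) := by
    rw [hid, Real.tan_arctan]
  rw [hLHS]
  -- monotonicity of tan
  have hθub : Real.arctan (k b) - Real.arctan (k a) < Real.pi/2 := by
    have := Real.arctan_lt_pi_div_two (k b)
    have h2 : 0 ≤ Real.arctan (k a) := by rw [← Real.arctan_zero]; exact Real.arctan_strictMono.monotone hka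
    linarith
  have hθlb : -(Real.pi/2) < Real.arctan (k b) - Real.arctan (k a) := by
    have := Real.arctan_lt_pi_div_two (k a)
    have h2 : 0 ≤ Real.arctan (k b) := by rw [← Real.arctan_zero]; exact Real.arctan_strictMono.monotone hkb
    linarith
  have hT0 : 0 < 2*ε*r*(M+1) := by positivity
  have hpi : (0:ℝ) < Real.pi/2 := by positivity
  exact Real.strictMonoOn_tan.monotoneOn ⟨hθlb, hθub⟩
    ⟨by linarith, hT⟩ key
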